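/- Let A be a finite two-sided skew brace whose additive group A_⊕ is solvable. Then A is simple (i.e., its only ideals are {1} and A) if and only if A is a trivial skew brace (a ⊕ b = a ⊙ b for all a, b ∈ A) whose cardinality is a prime number. -/

import Mathlib

/-- A subset `I` of a skew brace `A` is an ideal if it is (the carrier of) a normal subgroup
of both the additive group and the multiplicative group of `A`, and `λ_a(I) = I` for all
`a ∈ A`, where `λ_a x = -a + a * x`. -/
def IsIdeal (A : Type*) [AddGroup A] [Group A] (I : Set A) : Prop :=
  (∃ N : AddSubgroup A, N.Normal ∧ (N : Set A) = I) ∧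
  (∃ H : Subgroup A, H.Normal ∧ (H : Set A) = I) ∧
  (∀ a : A, (fun x => -a + a * x) '' I = I)

set_option linter.unusedVariables false
set_option linter.unusedSectionVars false


namespace SB
variable {A : Type*} [AddGroup A] [Group A]

theorem mul_zero' (hl : ∀ a b c : A, a * (b + c) = a * b + -a + a * c)
    (a : A) : a * 0 = a := by
  have h := hl a 0 0
  rw [add_zero] at h
  have h2 : a * 0 + -a + a * 0 = 0 + a * 0 := by rw [← h, zero_add]
  have h3 : a * 0 + -a = 0 := add_right_cancel h2
  have := add_neg_eq_zero.mp h3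
  exact this

theorem zero_mul' (hr : ∀ a b c : A, (a + b) * c = a * c + -c + b * c)
    (c : A) : 0 * c = c := by
  have h := hr 0 0 c
  rw [add_zero] at h
  have h2 : 0 * c + -c + 0 * c = 0 + 0 * c := by rw [← h, zero_add]
  have h3 : 0 * c + -c = 0 := add_right_cancel h2
  exact add_neg_eq_zero.mp h3

theorem zero_eq_one (hl : ∀ a b c : A, a * (b + c) = a * b + -a + a * c) :
    (0 : A) = 1 := by
  have := mul_zero' hl 1
  rwa [one_mul] at this

end SB

namespace SB2
variable {A : Type*} [AddGroup A] [Group A]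

def lam (a x : A) : A := -a + a * x

theorem lam_add (hl : ∀ a b c : A, a * (b + c) = a * b + -a + a * c)
    (a x y : A) : lam a (x + y) = lam a x + lam a y := by
  unfold lam
  rw [hl]
  simp [add_assoc]

theorem mul_neg' (hl : ∀ a b c : A, a * (b + c) = a * b + -a + a * c)
    (a b : A) : a * (-b) = a + -(a*b) + a := by
  have h := hl a b (-b)
  rw [add_neg_cancel, SB.mul_zero' hl] at h
  have : a * (-b) = -(a * b + -a) + a := eq_neg_add_of_add_eq h.symm
  rw [this, neg_add_rev, neg_neg]

theorem lam_comp (hl : ∀ a b c : A, a * (b + c) = a * b + -a + a * c)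
    (a b x : A) : lam a (lam b x) = lam (a * b) x := by
  unfold lam
  rw [hl, mul_neg' hl, ← mul_assoc]
  simp [add_assoc]

theorem lam_one' (hl : ∀ a b c : A, a * (b + c) = a * b + -a + a * c)
    (x : A) : lam 1 x = x := by
  unfold lam
  rw [one_mul, ← SB.zero_eq_one hl, neg_zero, zero_add]

/-- `lam a` as an additive automorphism. -/
def lamE (hl : ∀ a b c : A, a * (b + c) = a * b + -a + a * c) (a : A) : A ≃+ A where
  toFun := lam a
  invFun := lam a⁻¹
  left_inv x := by rw [lam_comp hl, inv_mul_cancel, lam_one' hl]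
  right_inv x := by rw [lam_comp hl, mul_inv_cancel, lam_one' hl]
  map_add' := lam_add hl a

end SB2

namespace SB3
variable {A : Type*} [AddGroup A] [Group A]
open SB2

def rho (c a : A) : A := a * c + -c

theorem rho_add (hr : ∀ a b c : A, (a + b) * c = a * c + -c + b * c)
    (c a b : A) : rho c (a + b) = rho c a + rho c b := by
  unfold rho
  rw [hr]
  simp [add_assoc]

theorem neg_mul' (hr : ∀ a b c : A, (a + b) * c = a * c + -c + b * c)
    (d c : A) : (-d) * c = c + -(d * c) + c := by
  have h := hr d (-d) c
  rw [add_neg_cancel, SB.zero_mul' hr] at h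
  have : (-d) * c = -(d * c + -c) + c := eq_neg_add_of_add_eq h.symm
  rw [this, neg_add_rev, neg_neg]

theorem rho_comp (hr : ∀ a b c : A, (a + b) * c = a * c + -c + b * c)
    (c d a : A) : rho c (rho d a) = rho (d * c) a := by
  unfold rho
  rw [hr, neg_mul' hr, ← mul_assoc]
  simp [add_assoc]

theorem rho_one' (hr : ∀ a b c : A, (a + b) * c = a * c + -c + b * c)
    (a : A) : rho 1 a = a := by
  have h0 : (0 : A) = 1 := by
    have := SB.zero_mul' hr 1
    rwa [mul_one] at this
  unfold rho
  rw [mul_one, ← h0, neg_zero, add_zero]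

/-- `rho c` as an additive automorphism. -/
def rhoE (hr : ∀ a b c : A, (a + b) * c = a * c + -c + b * c) (c : A) : A ≃+ A where
  toFun := rho c
  invFun := rho c⁻¹
  left_inv a := by rw [rho_comp hr, mul_inv_cancel, rho_one' hr]
  right_inv a := by rw [rho_comp hr, inv_mul_cancel, rho_one' hr]
  map_add' := rho_add hr c

theorem mul_eq (a b : A) : a * b = a + lam a b := by
  unfold lam; rw [add_neg_cancel_left]

theorem mul_eq' (a b : A) : a * b = rho b a + b := by
  unfold rho; rw [neg_add_cancel_right]

theorem inv_eq (hl : ∀ a b c : A, a * (b + c) = a * b + -a + a * c)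
    (a : A) : a⁻¹ = -(lam a⁻¹ a) := by
  have h : a⁻¹ * a = a⁻¹ + lam a⁻¹ a := mul_eq _ _
  rw [inv_mul_cancel, ← SB.zero_eq_one hl] at h
  exact add_eq_zero_iff_eq_neg.mp h.symm

theorem conj_eq (hl : ∀ a b c : A, a * (b + c) = a * b + -a + a * c)
    (hr : ∀ a b c : A, (a + b) * c = a * c + -c + b * c)
    (c a : A) : c * a * c⁻¹ = c + lam c (rho c⁻¹ a) + -c := by
  have h0 : (0 : A) = 1 := SB.zero_eq_one hl
  have h1 : a * c⁻¹ = rho c⁻¹ a + c⁻¹ := mul_eq' _ _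
  have h2 : c * (rho c⁻¹ a + c⁻¹) = c + (lam c (rho c⁻¹ a) + lam c c⁻¹) := by
    rw [mul_eq, lam_add hl]
  have h3 : lam c c⁻¹ = -c := by
    have : c * c⁻¹ = c + lam c c⁻¹ := mul_eq _ _
    rw [mul_inv_cancel, ← h0] at this
    have := eq_neg_add_of_add_eq this.symm
    rw [this, add_zero]
  rw [mul_assoc, h1, h2, h3, ← add_assoc]

end SB3

namespace SB4
variable {A : Type*} [AddGroup A] [Group A]
open SB2 SB3

def Dset (A : Type*) [AddGroup A] : Set A :=
  {x : A | Multiplicative.ofAdd x ∈ commutator (Multiplicative A)}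

theorem char_mem (σ : A ≃+ A) (x : A) : σ x ∈ Dset A ↔ x ∈ Dset A := by
  have hchar : (commutator (Multiplicative A)).Characteristic := inferInstance
  have h := hchar.fixed (AddEquiv.toMultiplicative σ)
  constructor
  · intro hx
    have : Multiplicative.ofAdd x ∈
        (commutator (Multiplicative A)).comap (AddEquiv.toMultiplicative σ).toMonoidHom := by
      rw [Subgroup.mem_comap]
      exact hx
    rwa [h] at this
  · intro hx
    have : Multiplicative.ofAdd x ∈
        (commutator (Multiplicative A)).comap (AddEquiv.toMultiplicative σ).toMonoidHom := by
      rw [h]; exact hx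
    rw [Subgroup.mem_comap] at this
    exact this

theorem Dset_zero : (0 : A) ∈ Dset A := (commutator (Multiplicative A)).one_mem

theorem Dset_add {x y : A} (hx : x ∈ Dset A) (hy : y ∈ Dset A) : x + y ∈ Dset A :=
  (commutator (Multiplicative A)).mul_mem hx hy

theorem Dset_neg {x : A} (hx : x ∈ Dset A) : -x ∈ Dset A :=
  (commutator (Multiplicative A)).inv_mem hx

theorem Dset_addconj {x : A} (hx : x ∈ Dset A) (g : A) : g + x + -g ∈ Dset A := by
  have hn : (commutator (Multiplicative A)).Normal := inferInstance
  exact hn.conj_mem _ hx (Multiplicative.ofAdd g)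

def Dsub (hl : ∀ a b c : A, a * (b + c) = a * b + -a + a * c) : Subgroup A where
  carrier := Dset A
  one_mem' := SB.zero_eq_one hl ▸ Dset_zero
  mul_mem' := by
    intro x y hx hy
    show x * y ∈ Dset A
    rw [mul_eq]
    exact Dset_add hx ((char_mem (lamE hl x) y).mpr hy)
  inv_mem' := by
    intro x hx
    show x⁻¹ ∈ Dset A
    rw [inv_eq hl]
    exact Dset_neg ((char_mem (lamE hl x⁻¹) x).mpr hx)

theorem Dset_ideal
    (hl : ∀ a b c : A, a * (b + c) = a * b + -a + a * c)
    (hr : ∀ a b c : A, (a + b) * c = a * c + -c + b * c) :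
    IsIdeal A (Dset A) := by
  refine ⟨⟨(commutator (Multiplicative A)).toAddSubgroup', ⟨?_⟩, rfl⟩, ?_, ?_⟩
  · intro n hn g
    exact Dset_addconj hn g
  · refine ⟨Dsub hl, ⟨?_⟩, rfl⟩
    intro n hn g
    show g * n * g⁻¹ ∈ Dset A
    rw [conj_eq hl hr]
    exact Dset_addconj ((char_mem (lamE hl g) _).mpr
      ((char_mem (rhoE hr g⁻¹) n).mpr hn)) g
  · intro a
    ext x
    constructor
    · rintro ⟨y, hy, rfl⟩
      exact (char_mem (lamE hl a) y).mpr hy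
    · intro hx
      refine ⟨lam a⁻¹ x, (char_mem (lamE hl a⁻¹) x).mpr hx, ?_⟩
      show lam a (lam a⁻¹ x) = x
      rw [lam_comp hl, mul_inv_cancel, lam_one' hl]

open scoped commutatorElement

theorem add_comm_of_simple
    (hl : ∀ a b c : A, a * (b + c) = a * b + -a + a * c)
    (hr : ∀ a b c : A, (a + b) * c = a * c + -c + b * c)
    (hsolv : IsSolvable (Multiplicative A))
    (hne : ({(1 : A)} : Set A) ≠ Set.univ)
    (hS : ∀ I : Set A, IsIdeal A I → I = {(1 : A)} ∨ I = Set.univ) :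
    ∀ x y : A, x + y = y + x := by
  have h0 : (0 : A) = 1 := SB.zero_eq_one hl
  rcases hS _ (Dset_ideal hl hr) with h | h
  · intro x y
    have hc : ⁅Multiplicative.ofAdd x, Multiplicative.ofAdd y⁆ ∈
        commutator (Multiplicative A) :=
      Subgroup.commutator_mem_commutator (Subgroup.mem_top _) (Subgroup.mem_top _)
    have : Multiplicative.toAdd ⁅Multiplicative.ofAdd x, Multiplicative.ofAdd y⁆ ∈ Dset A := hc
    rw [h] at this
    have h1 : ⁅Multiplicative.ofAdd x, Multiplicative.ofAdd y⁆ = (1 : Multiplicative A) := by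
      have := Set.mem_singleton_iff.mp this
      exact h0 ▸ this
    have := commutatorElement_eq_one_iff_mul_comm.mp h1
    exact this
  · exfalso
    have htop : commutator (Multiplicative A) = ⊤ := by
      rw [Subgroup.eq_top_iff']
      intro g
      have : Multiplicative.toAdd g ∈ Dset A := by rw [h]; trivial
      exact this
    have hall : ∀ n, derivedSeries (Multiplicative A) n = ⊤ := by
      intro n
      induction n with
      | zero => exact derivedSeries_zero _
      | succ n ih => rw [derivedSeries_succ, ih]; exact htop
    obtain ⟨n, hn⟩ := hsolv
    rw [hall n] at hn
    apply hne
    ext x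
    simp only [Set.mem_singleton_iff, Set.mem_univ, iff_true]
    have : Multiplicative.ofAdd x ∈ (⊥ : Subgroup (Multiplicative A)) := by
      rw [← hn]; trivial
    rw [Subgroup.mem_bot] at this
    have hx : x = (0 : A) := this
    rw [hx, h0]

end SB4

namespace SB5
variable {A : Type*} [AddGroup A] [Group A]
open SB2 SB3

def star (a b : A) : A := lam a b + -b

theorem lam_eq_star (a b : A) : lam a b = star a b + b :=
  (neg_add_cancel_right _ _).symm

theorem rho_eq_star (c a : A) : rho c a = a + star a c := by
  unfold SB3.rho star SB2.lam
  simp [add_assoc]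

theorem mul_expand (hc : ∀ x y : A, x + y = y + x) (a b : A) :
    a * b = a + b + star a b := by
  letI : AddCommGroup A := { ‹AddGroup A› with add_comm := hc }
  rw [mul_eq, lam_eq_star]
  abel

theorem star_add (hl : ∀ a b c : A, a * (b + c) = a * b + -a + a * c)
    (hc : ∀ x y : A, x + y = y + x) (a x y : A) :
    star a (x + y) = star a x + star a y := by
  letI : AddCommGroup A := { ‹AddGroup A› with add_comm := hc }
  have h := lam_add hl a x y
  rw [lam_eq_star, lam_eq_star, lam_eq_star] at h
  have h2 := sub_eq_zero.mpr h
  have h3 : star a (x + y) - (star a x + star a y) = 0 := by rw [← h2]; abel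
  exact sub_eq_zero.mp h3

theorem add_star (hr : ∀ a b c : A, (a + b) * c = a * c + -c + b * c)
    (hc : ∀ x y : A, x + y = y + x) (x y b : A) :
    star (x + y) b = star x b + star y b := by
  letI : AddCommGroup A := { ‹AddGroup A› with add_comm := hc }
  have h := rho_add hr b x y
  rw [rho_eq_star, rho_eq_star, rho_eq_star] at h
  have h2 := sub_eq_zero.mpr h
  have h3 : star (x + y) b - (star x b + star y b) = 0 := by rw [← h2]; abel
  exact sub_eq_zero.mp h3

theorem star_zero (hl : ∀ a b c : A, a * (b + c) = a * b + -a + a * c) (a : A) :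
    star a 0 = 0 := by
  unfold star SB2.lam
  rw [SB.mul_zero' hl]
  simp

theorem zero_star (hr : ∀ a b c : A, (a + b) * c = a * c + -c + b * c) (b : A) :
    star 0 b = 0 := by
  have h := rho_eq_star b (0 : A)
  unfold SB3.rho at h
  rw [SB.zero_mul' hr, add_neg_cancel, zero_add] at h
  exact h.symm

theorem star_neg (hl : ∀ a b c : A, a * (b + c) = a * b + -a + a * c)
    (hc : ∀ x y : A, x + y = y + x) (a x : A) :
    star a (-x) = -(star a x) := by
  have h := star_add hl hc a x (-x)
  rw [add_neg_cancel, star_zero hl] at h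
  exact (eq_neg_of_add_eq_zero_right h.symm).symm ▸ rfl

theorem neg_star (hr : ∀ a b c : A, (a + b) * c = a * c + -c + b * c)
    (hc : ∀ x y : A, x + y = y + x) (a x : A) :
    star (-a) x = -(star a x) := by
  have h := add_star hr hc a (-a) x
  rw [add_neg_cancel, zero_star hr] at h
  exact (eq_neg_of_add_eq_zero_right h.symm).symm ▸ rfl

theorem star_assoc (hl : ∀ a b c : A, a * (b + c) = a * b + -a + a * c)
    (hr : ∀ a b c : A, (a + b) * c = a * c + -c + b * c)
    (hc : ∀ x y : A, x + y = y + x) (a b c : A) :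
    star (star a b) c = star a (star b c) := by
  letI : AddCommGroup A := { ‹AddGroup A› with add_comm := hc }
  have e : ∀ x y : A, x * y = x + y + star x y := mul_expand hc
  have h := mul_assoc a b c
  rw [e, e, e, e] at h
  simp only [add_star hr hc, star_add hl hc] at h
  have h2 := sub_eq_zero.mpr h
  have h3 : star (star a b) c - star a (star b c) = 0 := by rw [← h2]; abel
  exact sub_eq_zero.mp h3

end SB5

namespace SB6
variable {A : Type*} [AddGroup A] [Group A]
open SB2 SB3 SB5

def starSet (X : Set A) : Set A := {z | ∃ a, ∃ x ∈ X, star a x = z}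

def msub (X : Set A) : AddSubgroup A := AddSubgroup.closure (X ∪ starSet X)

def psub (X : Set A) : AddSubgroup A := AddSubgroup.closure (starSet X)

theorem psub_le_msub (X : Set A) : psub X ≤ msub X :=
  AddSubgroup.closure_mono Set.subset_union_right

theorem star_mem_psub (hl : ∀ a b c : A, a * (b + c) = a * b + -a + a * c)
    (hr : ∀ a b c : A, (a + b) * c = a * c + -c + b * c)
    (hc : ∀ x y : A, x + y = y + x)
    (X : Set A) (c : A) {x : A} (hx : x ∈ psub X) : star c x ∈ psub X := by
  induction hx using AddSubgroup.closure_induction with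
  | mem z hz =>
    obtain ⟨a, x', hx', rfl⟩ := hz
    rw [← star_assoc hl hr hc]
    exact AddSubgroup.subset_closure ⟨star c a, x', hx', rfl⟩
  | zero => rw [star_zero hl]; exact (psub X).zero_mem
  | add z w hz hw hz' hw' => rw [star_add hl hc]; exact (psub X).add_mem hz' hw'
  | neg z hz hz' => rw [star_neg hl hc]; exact (psub X).neg_mem hz'

theorem star_mem_msub (hl : ∀ a b c : A, a * (b + c) = a * b + -a + a * c)
    (hr : ∀ a b c : A, (a + b) * c = a * c + -c + b * c)
    (hc : ∀ x y : A, x + y = y + x)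
    (X : Set A) (c : A) {x : A} (hx : x ∈ msub X) : star c x ∈ msub X := by
  induction hx using AddSubgroup.closure_induction with
  | mem z hz =>
    rcases hz with hz | hz
    · exact AddSubgroup.subset_closure (Or.inr ⟨c, z, hz, rfl⟩)
    · obtain ⟨a, x', hx', rfl⟩ := hz
      rw [← star_assoc hl hr hc]
      exact AddSubgroup.subset_closure (Or.inr ⟨star c a, x', hx', rfl⟩)
  | zero => rw [star_zero hl]; exact (msub X).zero_mem
  | add z w hz hw hz' hw' => rw [star_add hl hc]; exact (msub X).add_mem hz' hw'
  | neg z hz hz' => rw [star_neg hl hc]; exact (msub X).neg_mem hz'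

theorem lam_mem_psub (hl : ∀ a b c : A, a * (b + c) = a * b + -a + a * c)
    (hr : ∀ a b c : A, (a + b) * c = a * c + -c + b * c)
    (hc : ∀ x y : A, x + y = y + x)
    (X : Set A) (c : A) {x : A} (hx : x ∈ psub X) : lam c x ∈ psub X := by
  rw [lam_eq_star]
  exact (psub X).add_mem (star_mem_psub hl hr hc X c hx) hx

def Tset (A : Type*) [AddGroup A] [Group A] : Set A := {z | ∃ a b : A, star a b = z}

def Ssub (A : Type*) [AddGroup A] [Group A] : AddSubgroup A := AddSubgroup.closure (Tset A)

theorem psub_top (hl : ∀ a b c : A, a * (b + c) = a * b + -a + a * c)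
    (hr : ∀ a b c : A, (a + b) * c = a * c + -c + b * c)
    (hc : ∀ x y : A, x + y = y + x)
    (hS : Ssub A = ⊤) (X : Set A) (hX : msub X = ⊤) : psub X = ⊤ := by
  rw [eq_top_iff, ← hS, Ssub]
  rw [AddSubgroup.closure_le]
  rintro z ⟨a, b, rfl⟩
  have hb : b ∈ msub X := hX ▸ AddSubgroup.mem_top b
  clear hX
  induction hb using AddSubgroup.closure_induction with
  | mem z hz =>
    rcases hz with hz | hz
    · exact AddSubgroup.subset_closure ⟨a, z, hz, rfl⟩
    · obtain ⟨c, x', hx', rfl⟩ := hz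
      rw [← star_assoc hl hr hc]
      exact AddSubgroup.subset_closure ⟨star a c, x', hx', rfl⟩
  | zero => rw [star_zero hl]; exact (psub X).zero_mem
  | add z w hz hw hz' hw' => rw [star_add hl hc]; exact (psub X).add_mem hz' hw'
  | neg z hz hz' => rw [star_neg hl hc]; exact (psub X).neg_mem hz'

/-- `{star a x : a ∈ A}` is an additive subgroup. -/
def qsub (hr : ∀ a b c : A, (a + b) * c = a * c + -c + b * c)
    (hc : ∀ x y : A, x + y = y + x) (x : A) : AddSubgroup A where
  carrier := Set.range (fun a => star a x)
  zero_mem' := ⟨0, zero_star hr x⟩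
  add_mem' := by
    rintro _ _ ⟨a, rfl⟩ ⟨b, rfl⟩
    exact ⟨a + b, add_star hr hc a b x⟩
  neg_mem' := by
    rintro _ ⟨a, rfl⟩
    exact ⟨-a, neg_star hr hc a x⟩

theorem psub_insert_le (hr : ∀ a b c : A, (a + b) * c = a * c + -c + b * c)
    (hc : ∀ x y : A, x + y = y + x) (x : A) (X : Set A) :
    psub (insert x X) ≤ psub X ⊔ qsub hr hc x := by
  rw [psub, AddSubgroup.closure_le]
  rintro z ⟨a, y, hy, rfl⟩
  rcases hy with rfl | hy
  · exact AddSubgroup.mem_sup_right ⟨a, rfl⟩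
  · exact AddSubgroup.mem_sup_left (AddSubgroup.subset_closure ⟨a, y, hy, rfl⟩)

theorem nakayama_step (hl : ∀ a b c : A, a * (b + c) = a * b + -a + a * c)
    (hr : ∀ a b c : A, (a + b) * c = a * c + -c + b * c)
    (hc : ∀ x y : A, x + y = y + x)
    (hS : Ssub A = ⊤) (x : A) (X : Set A)
    (hX : msub (insert x X) = ⊤) : msub X = ⊤ := by
  letI : AddCommGroup A := { ‹AddGroup A› with add_comm := hc }
  have hp : psub (insert x X) = ⊤ := psub_top hl hr hc hS _ hX
  have hx : x ∈ psub X ⊔ qsub hr hc x := by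
    apply psub_insert_le hr hc x X
    rw [hp]; trivial
  rw [AddSubgroup.mem_sup] at hx
  obtain ⟨y, hy, z, ⟨a, rfl⟩, hyz⟩ := hx
  -- x = y + star a x, so lam (-a) x = star (-a) x + x = -(star a x) + x = y (up to comm)
  have hlam : lam (-a) x = y := by
    rw [lam_eq_star, neg_star hr hc]
    have h2 := sub_eq_zero.mpr hyz.symm
    have h3 : -(star a x) + x - y = 0 := by rw [← h2]; abel
    calc -(star a x) + x = -(star a x) + x - y + y := by abel
    _ = y := by rw [h3]; abel
  have hxmem : x ∈ psub X := by
    have : lam ((-a)⁻¹) (lam (-a) x) ∈ psub X :=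
      lam_mem_psub hl hr hc X _ (hlam ▸ hy)
    rwa [lam_comp hl, inv_mul_cancel, lam_one' hl] at this
  rw [eq_top_iff, ← hX, msub, AddSubgroup.closure_le]
  rintro z (hz | ⟨a', y', hy', rfl⟩)
  · rcases hz with rfl | hz
    · exact psub_le_msub X hxmem
    · exact AddSubgroup.subset_closure (Or.inl hz)
  · rcases hy' with rfl | hy'
    · exact star_mem_msub hl hr hc X a' (psub_le_msub X hxmem)
    · exact AddSubgroup.subset_closure (Or.inr ⟨a', y', hy', rfl⟩)

theorem nakayama (hl : ∀ a b c : A, a * (b + c) = a * b + -a + a * c)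
    (hr : ∀ a b c : A, (a + b) * c = a * c + -c + b * c)
    (hc : ∀ x y : A, x + y = y + x)
    (hS : Ssub A = ⊤) :
    ∀ (n : ℕ) (X : Finset A), X.card ≤ n → msub (X : Set A) = ⊤ →
      ∀ x : A, x = 0 := by
  intro n
  induction n with
  | zero =>
    intro X hcard hX x
    have hcard' : X = ∅ := Finset.card_eq_zero.mp (Nat.le_zero.mp hcard)
    subst hcard'
    have : msub ((∅ : Finset A) : Set A) = ⊥ := by
      rw [msub, Finset.coe_empty]
      have : starSet (∅ : Set A) = ∅ := by
        ext z; simp [starSet]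
      rw [this, Set.union_empty, AddSubgroup.closure_empty]
    rw [this] at hX
    have : x ∈ (⊥ : AddSubgroup A) := hX ▸ AddSubgroup.mem_top x
    exact AddSubgroup.mem_bot.mp this
  | succ n ih =>
    classical
    intro X hcard hX x
    rcases Finset.eq_empty_or_nonempty X with rfl | ⟨y, hy⟩
    · have : msub ((∅ : Finset A) : Set A) = ⊥ := by
        rw [msub, Finset.coe_empty]
        have : starSet (∅ : Set A) = ∅ := by ext z; simp [starSet]
        rw [this, Set.union_empty, AddSubgroup.closure_empty]
      rw [this] at hX
      exact AddSubgroup.mem_bot.mp (hX ▸ AddSubgroup.mem_top x)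
    · have hins : (X : Set A) = insert y ((X.erase y : Finset A) : Set A) := by
        rw [Finset.coe_erase, Set.insert_diff_singleton]
        exact (Set.insert_eq_self.mpr (Finset.mem_coe.mpr hy)).symm
      rw [hins] at hX
      have h2 : msub ((X.erase y : Finset A) : Set A) = ⊤ :=
        nakayama_step hl hr hc hS y _ hX
      exact ih (X.erase y) (by
        have := Finset.card_erase_of_mem hy
        omega) h2 x

end SB6

namespace SB7
variable {A : Type*} [AddGroup A] [Group A]
open SB2 SB3 SB5 SB6

theorem addconj_eq (hc : ∀ x y : A, x + y = y + x) (g n : A) : g + n + -g = n := by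
  rw [hc g n, add_neg_cancel_right]

/-- In a trivial skew brace, every additive subgroup is a multiplicative subgroup. -/
def trivSub (hl : ∀ a b c : A, a * (b + c) = a * b + -a + a * c)
    (htriv : ∀ a b : A, a + b = a * b) (N : AddSubgroup A) : Subgroup A where
  carrier := (N : Set A)
  one_mem' := by rw [← SB.zero_eq_one hl]; exact N.zero_mem
  mul_mem' := by
    intro a b ha hb
    show a * b ∈ N
    rw [← htriv]
    exact N.add_mem ha hb
  inv_mem' := by
    intro a ha
    show a⁻¹ ∈ N
    have h1 : a⁻¹ + a = a⁻¹ * a := htriv _ _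
    rw [inv_mul_cancel, ← SB.zero_eq_one hl] at h1
    rw [eq_neg_of_add_eq_zero_left h1]
    exact N.neg_mem ha

def Smul (hl : ∀ a b c : A, a * (b + c) = a * b + -a + a * c)
    (hc : ∀ x y : A, x + y = y + x) : Subgroup A where
  carrier := (Ssub A : Set A)
  one_mem' := by
    rw [← SB.zero_eq_one hl]
    exact (Ssub A).zero_mem
  mul_mem' := by
    intro x y hx hy
    show x * y ∈ Ssub A
    rw [mul_expand hc]
    exact (Ssub A).add_mem ((Ssub A).add_mem hx hy)
      (AddSubgroup.subset_closure ⟨x, y, rfl⟩)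
  inv_mem' := by
    intro x hx
    show x⁻¹ ∈ Ssub A
    rw [inv_eq hl, lam_eq_star]
    exact (Ssub A).neg_mem ((Ssub A).add_mem
      (AddSubgroup.subset_closure ⟨x⁻¹, x, rfl⟩) hx)

theorem Ssub_ideal (hl : ∀ a b c : A, a * (b + c) = a * b + -a + a * c)
    (hr : ∀ a b c : A, (a + b) * c = a * c + -c + b * c)
    (hc : ∀ x y : A, x + y = y + x) :
    IsIdeal A (Ssub A : Set A) := by
  refine ⟨⟨Ssub A, ⟨fun n hn g => ?_⟩, rfl⟩, ⟨Smul hl hc, ⟨fun n hn g => ?_⟩, rfl⟩, ?_⟩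
  · rw [addconj_eq hc]; exact hn
  · show g * n * g⁻¹ ∈ Ssub A
    rw [conj_eq hl hr, addconj_eq hc]
    have h1 : rho g⁻¹ n ∈ Ssub A := by
      rw [rho_eq_star]
      exact (Ssub A).add_mem hn (AddSubgroup.subset_closure ⟨n, g⁻¹, rfl⟩)
    rw [lam_eq_star]
    exact (Ssub A).add_mem (AddSubgroup.subset_closure ⟨g, _, rfl⟩) h1
  · intro a
    ext x
    constructor
    · rintro ⟨y, hy, rfl⟩
      show lam a y ∈ Ssub A
      rw [lam_eq_star]
      exact (Ssub A).add_mem (AddSubgroup.subset_closure ⟨a, y, rfl⟩) hy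
    · intro hx
      refine ⟨lam a⁻¹ x, ?_, ?_⟩
      · show lam a⁻¹ x ∈ Ssub A
        rw [lam_eq_star]
        exact (Ssub A).add_mem (AddSubgroup.subset_closure ⟨a⁻¹, x, rfl⟩) hx
      · show lam a (lam a⁻¹ x) = x
        rw [lam_comp hl, mul_inv_cancel, lam_one' hl]

theorem phase2 (hl : ∀ a b c : A, a * (b + c) = a * b + -a + a * c)
    (hr : ∀ a b c : A, (a + b) * c = a * c + -c + b * c)
    (hc : ∀ x y : A, x + y = y + x) [Finite A]
    (hne : ({(1 : A)} : Set A) ≠ Set.univ)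
    (hS : ∀ I : Set A, IsIdeal A I → I = {(1 : A)} ∨ I = Set.univ) :
    (∀ a b : A, a + b = a * b) ∧ (Nat.card A).Prime := by
  classical
  have h0 : (0 : A) = 1 := SB.zero_eq_one hl
  letI : Fintype A := Fintype.ofFinite A
  have htriv : ∀ a b : A, a + b = a * b := by
    rcases hS _ (Ssub_ideal hl hr hc) with h | h
    · intro a b
      have : star a b ∈ ({(1 : A)} : Set A) := by
        rw [← h]; exact AddSubgroup.subset_closure ⟨a, b, rfl⟩
      have hst : star a b = 0 := by
        rw [Set.mem_singleton_iff] at this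
        rw [this, h0]
      rw [mul_expand hc, hst, add_zero]
    · exfalso
      have hStop : Ssub A = ⊤ := by
        rw [AddSubgroup.eq_top_iff']
        intro x
        have : x ∈ (Ssub A : Set A) := by rw [h]; trivial
        exact this
      have hmsub : msub ((Finset.univ : Finset A) : Set A) = ⊤ := by
        rw [AddSubgroup.eq_top_iff']
        intro x
        exact AddSubgroup.subset_closure (Or.inl (by simp))
      have hall := nakayama hl hr hc hStop (Finset.univ.card) Finset.univ le_rfl hmsub
      apply hne
      ext x
      simp only [Set.mem_singleton_iff, Set.mem_univ, iff_true]
      rw [hall x, h0]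
  refine ⟨htriv, ?_⟩
  -- now the prime order part
  have hnontriv : Nontrivial A := by
    by_contra hcon
    apply hne
    rw [not_nontrivial_iff_subsingleton] at hcon
    ext x
    simp only [Set.mem_singleton_iff, Set.mem_univ, iff_true]
    exact Subsingleton.elim x 1
  have hcard1 : Nat.card A ≠ 1 := by
    intro h
    rw [Nat.card_eq_one_iff_unique] at h
    haveI := hnontriv
    exact absurd h.1 (not_subsingleton A)
  set p := (Nat.card A).minFac with hp
  have hpprime : p.Prime := Nat.minFac_prime hcard1
  haveI : Fact p.Prime := ⟨hpprime⟩
  have hdvd : p ∣ Fintype.card A := by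
    rw [← Nat.card_eq_fintype_card]
    exact Nat.minFac_dvd _
  obtain ⟨x, hx⟩ := exists_prime_addOrderOf_dvd_card p hdvd
  -- zmultiples x is an ideal
  have hideal : IsIdeal A ((AddSubgroup.zmultiples x : AddSubgroup A) : Set A) := by
    set N := AddSubgroup.zmultiples x with hN
    have hlamid : ∀ a y : A, lam a y = y := by
      intro a y
      show -a + a * y = y
      rw [← htriv, ← add_assoc, neg_add_cancel, zero_add]
    refine ⟨⟨N, ⟨fun n hn g => ?_⟩, rfl⟩, ?_, ?_⟩
    · rw [addconj_eq hc]; exact hn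
    · refine ⟨trivSub hl htriv N, ⟨fun n hn g => ?_⟩, rfl⟩
      show g * n * g⁻¹ ∈ N
      rw [conj_eq hl hr, addconj_eq hc, hlamid]
      show rho g⁻¹ n ∈ N
      rw [rho_eq_star]
      have : star n g⁻¹ = 0 := by
        show lam n g⁻¹ + -g⁻¹ = 0
        rw [hlamid, add_neg_cancel]
      rw [this, add_zero]
      exact hn
    · intro a
      have : (fun y => -a + a * y) = id := by
        funext y
        exact hlamid a y
      rw [this, Set.image_id]
  rcases hS _ hideal with h | h
  · exfalso
    have hxmem : x ∈ AddSubgroup.zmultiples x := AddSubgroup.mem_zmultiples x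
    have : x ∈ ({(1 : A)} : Set A) := by rw [← h]; exact hxmem
    rw [Set.mem_singleton_iff] at this
    have hx0 : x = 0 := by rw [this, h0]
    rw [hx0, addOrderOf_zero] at hx
    exact hpprime.one_lt.ne' hx.symm
  · have htop : AddSubgroup.zmultiples x = ⊤ := by
      rw [AddSubgroup.eq_top_iff']
      intro y
      have : y ∈ ((AddSubgroup.zmultiples x : AddSubgroup A) : Set A) := by
        rw [h]; trivial
      exact this
    have hcards := Nat.card_zmultiples x
    rw [htop] at hcards
    rw [AddSubgroup.card_top] at hcards
    rw [hcards, hx]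
    exact hpprime

end SB7

/-- A finite two-sided skew brace with solvable additive group is simple (its only ideals
are the two distinct ideals `{1}` and `A`) if and only if it is a trivial skew brace of
prime order. -/
theorem finite_two_sided_skew_brace_simple_iff_trivial_of_prime_order
    (A : Type*) [AddGroup A] [Group A] [Finite A]
    (hl : ∀ a b c : A, a * (b + c) = a * b + -a + a * c)
    (hr : ∀ a b c : A, (a + b) * c = a * c + -c + b * c)
    (hsolv : IsSolvable (Multiplicative A)) :
    (({(1 : A)} : Set A) ≠ Set.univ ∧
      ∀ I : Set A, IsIdeal A I → I = {(1 : A)} ∨ I = Set.univ) ↔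
      ((∀ a b : A, a + b = a * b) ∧ (Nat.card A).Prime) := by
  have h0 : (0 : A) = 1 := SB.zero_eq_one hl
  constructor
  · rintro ⟨hne, hS⟩
    have hc := SB4.add_comm_of_simple hl hr hsolv hne hS
    exact SB7.phase2 hl hr hc hne hS
  · rintro ⟨htriv, hp⟩
    have hnontriv : Nontrivial A := by
      by_contra hcon
      rw [not_nontrivial_iff_subsingleton] at hcon
      exact hp.ne_one (Nat.card_of_subsingleton (0 : A))
    constructor
    · intro h
      obtain ⟨x, y, hxy⟩ := hnontriv
      have hx : x ∈ ({(1 : A)} : Set A) := by rw [h]; trivial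
      have hy : y ∈ ({(1 : A)} : Set A) := by rw [h]; trivial
      rw [Set.mem_singleton_iff] at hx hy
      exact hxy (hx.trans hy.symm)
    · intro I hI
      obtain ⟨N, -, rfl⟩ := hI.1
      have hdvd : Nat.card N ∣ Nat.card A := AddSubgroup.card_addSubgroup_dvd_card N
      rcases (Nat.Prime.eq_one_or_self_of_dvd hp _ hdvd) with h | h
      · left
        have hbot : N = ⊥ := AddSubgroup.eq_bot_of_card_eq N h
        rw [hbot]
        ext z
        simp [h0.symm]
      · right
        have htop : N = ⊤ := by
          apply AddSubgroup.eq_top_of_card_eq N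
          rw [h]
        rw [htop]
        rfl
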